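/- Let n ≥ 1 and let η₁, …, ηₙ be real numbers. Let M(η) be the real n×n matrix with diagonal entries M_{ii} = (ηᵢ − 1)² and off-diagonal entries M_{ij} = ηᵢηⱼ for i ≠ j. Then det M(η) = Σ_{i=1}^n ηᵢ² Π_{j ≠ i} (1 − 2ηⱼ) + Π_{j=1}^n (1 − 2ηⱼ). -/

import Mathlib

open Finset

lemma det_diag_add_rank_one (n : ℕ) (d u : Fin n → ℝ) :
    (Matrix.of fun i j => u i * u j + if i = j then d i else 0).det
      = ∑ i, (u i) ^ 2 * ∏ j ∈ Finset.univ.erase i, d j + ∏ j, d j := by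
  classical
  set f : (Fin n → ℝ) [⋀^Fin n]→ₗ[ℝ] ℝ := Matrix.detRowAlternating with hf
  set a : Fin n → Fin n → ℝ := fun i => u i • u with ha
  set b : Fin n → Fin n → ℝ := fun i => d i • (Pi.single i (1 : ℝ) : Fin n → ℝ) with hb
  have key : (Matrix.of fun i j => u i * u j + if i = j then d i else 0) = a + b := by
    ext i j
    by_cases h : i = j <;>
      simp [ha, hb, h, Pi.single_apply, eq_comm]
  have hdet : (Matrix.of fun i j => u i * u j + if i = j then d i else 0).det
      = f.toMultilinearMap (a + b) := by rw [key]; rfl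
  rw [hdet, f.toMultilinearMap.map_add_univ]
  -- each term factors as product of scalars times a ±1/0 determinant
  have hfac : ∀ s : Finset (Fin n),
      f.toMultilinearMap (s.piecewise a b)
        = (∏ i, if i ∈ s then u i else d i)
            * f (fun i => if i ∈ s then u else Pi.single i (1 : ℝ)) := by
    intro s
    have hp : s.piecewise a b
        = fun i => (if i ∈ s then u i else d i) •
            (if i ∈ s then u else Pi.single i (1 : ℝ)) := by
      funext i
      by_cases h : i ∈ s <;> simp [Finset.piecewise, h, ha, hb]
    rw [hp, f.toMultilinearMap.map_smul_univ]
    rfl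
  have gempty : f (fun i : Fin n => (Pi.single i (1 : ℝ) : Fin n → ℝ)) = 1 := by
    have h1 : (fun i : Fin n => (Pi.single i (1 : ℝ) : Fin n → ℝ))
        = (1 : Matrix (Fin n) (Fin n) ℝ) := by
      ext i j
      simp [Matrix.one_apply, Pi.single_apply, eq_comm]
    rw [h1]
    exact Matrix.det_one
  have gsingle : ∀ i : Fin n,
      f (fun k => if k = i then u else Pi.single k (1 : ℝ)) = u i := by
    intro i
    have h1 : (fun k => if k = i then u else Pi.single k (1 : ℝ))
        = (1 : Matrix (Fin n) (Fin n) ℝ).updateRow i u := by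
      ext k j
      by_cases h : k = i <;>
        simp [Matrix.updateRow_apply, Matrix.one_apply, Pi.single_apply, h, eq_comm]
    rw [h1]
    have h0 : f ((1 : Matrix (Fin n) (Fin n) ℝ).updateRow i u)
        = ((1 : Matrix (Fin n) (Fin n) ℝ).updateRow i u).det := rfl
    rw [h0]
    have h2 : ((1 : Matrix (Fin n) (Fin n) ℝ).updateRow i u).det
        = ((1 : Matrix (Fin n) (Fin n) ℝ).updateCol i u).det := by
      rw [← Matrix.det_transpose ((1 : Matrix (Fin n) (Fin n) ℝ).updateRow i u),
        ← Matrix.updateCol_transpose, Matrix.transpose_one]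
    rw [h2, ← Matrix.cramer_apply, Matrix.cramer_one]
    rfl
  set F : Finset (Fin n) → ℝ := fun s =>
    (∏ i, if i ∈ s then u i else d i)
      * f (fun i => if i ∈ s then u else Pi.single i (1 : ℝ)) with hF
  have hterms : ∀ s : Finset (Fin n), f.toMultilinearMap (s.piecewise a b) = F s := hfac
  rw [Finset.sum_congr rfl fun s _ => hterms s]
  -- F s = 0 unless s = ∅ or s is a singleton
  set T : Finset (Finset (Fin n)) := insert ∅ (Finset.univ.image fun i => ({i} : Finset (Fin n)))
    with hT
  have hzero : ∀ s ∈ (Finset.univ : Finset (Finset (Fin n))), s ∉ T → F s = 0 := by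
    intro s _ hs
    simp only [hT, Finset.mem_insert, Finset.mem_image, Finset.mem_univ, true_and] at hs
    push_neg at hs
    obtain ⟨hne, hnsing⟩ := hs
    have hcard : 1 < s.card := by
      rcases Nat.lt_or_ge 1 s.card with h | h
      · exact h
      · exfalso
        rcases Nat.le_one_iff_eq_zero_or_eq_one.mp h with h0 | h1
        · exact hne.ne_empty (Finset.card_eq_zero.mp h0)
        · obtain ⟨i, hi⟩ := Finset.card_eq_one.mp h1
          exact hnsing i hi.symm
    obtain ⟨i, hi, j, hj, hij⟩ := Finset.one_lt_card.mp hcard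
    have : f (fun k => if k ∈ s then u else Pi.single k (1 : ℝ)) = 0 := by
      apply f.map_eq_zero_of_eq _ _ hij
      simp [hi, hj]
    simp [hF, this]
  rw [← Finset.sum_subset (Finset.subset_univ T) hzero]
  have hninT : (∅ : Finset (Fin n)) ∉ Finset.univ.image fun i => ({i} : Finset (Fin n)) := by
    simp
  rw [hT, Finset.sum_insert hninT,
    Finset.sum_image (fun i _ j _ h => Finset.singleton_injective h)]
  have hFempty : F ∅ = ∏ j, d j := by
    simp [hF, gempty]
  have hFsingle : ∀ i : Fin n, F {i} = (u i) ^ 2 * ∏ j ∈ Finset.univ.erase i, d j := by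
    intro i
    rw [hF]
    simp only [Finset.mem_singleton]
    rw [gsingle i, ← Finset.mul_prod_erase Finset.univ _ (Finset.mem_univ i), if_pos rfl]
    have : ∏ k ∈ Finset.univ.erase i, (if k = i then u k else d k)
        = ∏ k ∈ Finset.univ.erase i, d k := by
      apply Finset.prod_congr rfl
      intro k hk
      rw [if_neg (Finset.ne_of_mem_erase hk)]
    rw [this]
    ring
  rw [hFempty, Finset.sum_congr rfl fun i _ => hFsingle i]
  ring

/-- The determinant of the matrix with diagonal entries `(ηᵢ − 1)²` and
off-diagonal entries `ηᵢηⱼ` equals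
`∑ᵢ ηᵢ² ∏_{j≠i} (1 − 2ηⱼ) + ∏ⱼ (1 − 2ηⱼ)`. -/
theorem det_eta_matrix (n : ℕ) (hn : 1 ≤ n) (η : Fin n → ℝ) :
    (Matrix.of fun i j => if i = j then (η i - 1) ^ 2 else η i * η j).det
      = ∑ i, (η i) ^ 2 * ∏ j ∈ Finset.univ.erase i, (1 - 2 * η j)
        + ∏ j, (1 - 2 * η j) := by
  have hM : (Matrix.of fun i j => if i = j then (η i - 1) ^ 2 else η i * η j)
      = (Matrix.of fun i j => η i * η j + if i = j then (1 - 2 * η i) else 0) := by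
    ext i j
    by_cases h : i = j
    · subst h; simp; ring
    · simp [h]
  rw [hM, det_diag_add_rank_one n (fun j => 1 - 2 * η j) η]
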